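/- Let a > 0, λ > 0, t0 = (a+1)/a, T0 = (a+1)^2/a, and let x0 : ℝ → ℝ be the T0-periodic function with x0(t) = t on [0,1], x0(t) = −a(t − t0) on [1, t0+1], x0(t) = t − T0 on [t0+1, T0]. Then the function u0(t) = exp(λ·x0(t)) is continuous, strictly positive, T0-periodic, and for every t ∈ ℝ not of the form 1 + kT0 or t0 + 1 + kT0 with k ∈ ℤ, u0 is differentiable at t with u0′(t) = λ·F(u0(t−1))·u0(t). -/

import Mathlib

/-- The relay nonlinearity of the Hutchinson equation: `F a u = 1` if `0 < u ≤ 1`,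
`F a u = -a` if `u > 1` (the value off `(0,∞)` is irrelevant). -/
noncomputable def F (a u : ℝ) : ℝ := if 0 < u ∧ u ≤ 1 then 1 else if 1 < u then -a else 0

private lemma aux_deriv (lam c d : ℝ) (x0 : ℝ → ℝ) (l u s : ℝ) (hl : l < s) (hu : s < u)
    (h : ∀ r ∈ Set.Icc l u, x0 r = c * r + d) :
    HasDerivAt (fun r => Real.exp (lam * x0 r)) (lam * c * Real.exp (lam * x0 s)) s := by
  have hev : (fun r => Real.exp (lam * x0 r)) =ᶠ[nhds s]
      (fun r => Real.exp (lam * (c * r + d))) := by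
    filter_upwards [Icc_mem_nhds hl hu] with r hr
    rw [h r hr]
  have h1 : HasDerivAt (fun r : ℝ => lam * (c * r + d)) (lam * c) s := by
    simpa using (((hasDerivAt_id s).const_mul c).add_const d).const_mul lam
  have h3 := h1.exp.congr_of_eventuallyEq hev
  rw [h s ⟨le_of_lt hl, le_of_lt hu⟩]
  rw [mul_comm]
  exact h3

private lemma aux_shift (f : ℝ → ℝ) (c D t : ℝ) (h : HasDerivAt f D (t - c)) :
    HasDerivAt (fun r => f (r - c)) D t := by
  have := h.comp t ((hasDerivAt_id t).sub_const c)
  simp only [mul_one] at this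
  exact this

/-- with `x0` the `T0`-periodic solution, the function
`u0(t) = exp(λ x0(t))` is continuous, strictly positive, `T0`-periodic, and away
from the points `1 + k T0`, `t0 + 1 + k T0` (`k ∈ ℤ`) it is differentiable with
`u0'(t) = λ F(u0(t-1)) u0(t)`. -/
theorem stmt_18 (a lam : ℝ) (ha : 0 < a) (hlam : 0 < lam) (t0 T0 : ℝ)
    (ht0 : t0 = (a + 1) / a) (hT0 : T0 = (a + 1) ^ 2 / a)
    (x0 : ℝ → ℝ)
    (hx0per : ∀ t : ℝ, x0 (t + T0) = x0 t)
    (hx0a : ∀ t ∈ Set.Icc (0 : ℝ) 1, x0 t = t)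
    (hx0b : ∀ t ∈ Set.Icc (1 : ℝ) (t0 + 1), x0 t = -a * (t - t0))
    (hx0c : ∀ t ∈ Set.Icc (t0 + 1) T0, x0 t = t - T0) :
    Continuous (fun t : ℝ => Real.exp (lam * x0 t)) ∧
    (∀ t : ℝ, 0 < Real.exp (lam * x0 t)) ∧
    (∀ t : ℝ, Real.exp (lam * x0 (t + T0)) = Real.exp (lam * x0 t)) ∧
    (∀ t : ℝ, (∀ k : ℤ, t ≠ 1 + (k : ℝ) * T0 ∧ t ≠ t0 + 1 + (k : ℝ) * T0) →
      HasDerivAt (fun s : ℝ => Real.exp (lam * x0 s))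
        (lam * F a (Real.exp (lam * x0 (t - 1))) * Real.exp (lam * x0 t)) t) := by
  have hane : a ≠ 0 := ne_of_gt ha
  have hat0 : a * t0 = a + 1 := by rw [ht0]; field_simp
  have ht0gt1 : 1 < t0 := by rw [ht0, lt_div_iff₀ ha]; linarith
  have hT0eq : T0 = t0 + 1 + a := by rw [hT0, ht0]; field_simp; ring
  have hT0pos : 0 < T0 := by rw [hT0]; positivity
  have ht01T0 : t0 + 1 < T0 := by linarith
  have hper : Function.Periodic x0 T0 := hx0per
  -- extended formulas
  have hx0e : ∀ r ∈ Set.Icc (-a) (1 : ℝ), x0 r = r := by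
    intro r hr
    rcases le_or_gt 0 r with h | h
    · exact hx0a r ⟨h, hr.2⟩
    · have h1 := hx0per r
      rw [← h1, hx0c (r + T0) ⟨by linarith [hr.1], by linarith⟩]
      ring
  have hx0f : ∀ r ∈ Set.Icc (t0 + 1) (T0 + 1), x0 r = r - T0 := by
    intro r hr
    rcases le_or_gt r T0 with h | h
    · exact hx0c r ⟨hr.1, h⟩
    · have h1 := hx0per (r - T0)
      rw [show r - T0 + T0 = r by ring] at h1
      rw [h1, hx0a (r - T0) ⟨by linarith, by linarith [hr.2]⟩]
  -- global continuous formula on one (extended) period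
  have hgeq : ∀ r ∈ Set.Icc (-a) (T0 + 1),
      x0 r = max (min r (-a * r + a * t0)) (r - T0) := by
    intro r hr
    rcases le_total r 1 with h1 | h1
    · rw [hx0e r ⟨hr.1, h1⟩, min_eq_left (by nlinarith), max_eq_left (by linarith [hr.1])]
    · rcases le_total r (t0 + 1) with h2 | h2
      · rw [hx0b r ⟨h1, h2⟩, show -a * (r - t0) = -a * r + a * t0 by ring,
          min_eq_right (by nlinarith), max_eq_left (by nlinarith)]
      · rw [hx0f r ⟨h2, hr.2⟩, min_eq_right (by nlinarith), max_eq_right (by nlinarith)]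
  have hgcont : Continuous (fun r : ℝ => max (min r (-a * r + a * t0)) (r - T0)) := by
    fun_prop
  -- continuity of x0 everywhere
  have hCA : ∀ t : ℝ, ContinuousAt x0 t := by
    intro t
    set k : ℤ := ⌊t / T0⌋ with hk
    set s : ℝ := t - (k : ℝ) * T0 with hs
    have h1 : (k : ℝ) * T0 ≤ t := by
      have := Int.floor_le (t / T0)
      calc (k : ℝ) * T0 ≤ (t / T0) * T0 := by
            apply mul_le_mul_of_nonneg_right this (le_of_lt hT0pos)
        _ = t := by field_simp
    have h2 : t < ((k : ℝ) + 1) * T0 := by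
      have h := Int.lt_floor_add_one (t / T0)
      have := (div_lt_iff₀ hT0pos).mp h
      push_cast at this ⊢
      linarith
    have hs0 : 0 ≤ s := by rw [hs]; linarith
    have hs1 : s < T0 := by rw [hs]; linarith
    have hcs : ContinuousAt x0 s := by
      apply hgcont.continuousAt.congr
      filter_upwards [Icc_mem_nhds (show -a < s by linarith) (show s < T0 + 1 by linarith)]
        with r hr
      exact (hgeq r hr).symm
    have hshift : x0 = fun r => x0 (r - (k : ℝ) * T0) :=
      funext fun r => (hper.sub_int_mul_eq (x := r) k).symm
    rw [hshift]
    exact ContinuousAt.comp hcs ((continuous_id.sub continuous_const).continuousAt)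
  have hxcont : Continuous x0 := continuous_iff_continuousAt.mpr hCA
  refine ⟨Real.continuous_exp.comp (continuous_const.mul hxcont), fun t => Real.exp_pos _,
    fun t => by rw [hx0per], ?_⟩
  -- derivative part
  intro t hne
  set k : ℤ := ⌊(t - 1) / T0⌋ with hk
  set s : ℝ := t - (k : ℝ) * T0 with hs
  have h1 : (k : ℝ) * T0 ≤ t - 1 := by
    have := Int.floor_le ((t - 1) / T0)
    calc (k : ℝ) * T0 ≤ ((t - 1) / T0) * T0 := by
          apply mul_le_mul_of_nonneg_right this (le_of_lt hT0pos)
      _ = t - 1 := by field_simp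
  have h2 : t - 1 < ((k : ℝ) + 1) * T0 := by
    have h := Int.lt_floor_add_one ((t - 1) / T0)
    have := (div_lt_iff₀ hT0pos).mp h
    push_cast at this ⊢
    linarith
  have hsge : 1 ≤ s := by rw [hs]; linarith
  have hslt : s < 1 + T0 := by rw [hs]; linarith
  have hsne1 : s ≠ 1 := by
    intro h
    exact (hne k).1 (by rw [hs] at h; linarith)
  have hsne2 : s ≠ t0 + 1 := by
    intro h
    exact (hne k).2 (by rw [hs] at h; linarith)
  have hsgt1 : 1 < s := lt_of_le_of_ne hsge (Ne.symm hsne1)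
  have hx0ts : x0 t = x0 s := (hper.sub_int_mul_eq (x := t) k).symm
  have hx0ts1 : x0 (t - 1) = x0 (s - 1) := by
    have := hper.sub_int_mul_eq (x := t - 1) k
    rw [show t - 1 - (k : ℝ) * T0 = s - 1 by rw [hs]; ring] at this
    exact this.symm
  have hshift : (fun r : ℝ => Real.exp (lam * x0 r))
      = fun r => Real.exp (lam * x0 (r - (k : ℝ) * T0)) :=
    funext fun r => by rw [hper.sub_int_mul_eq (x := r) k]
  rcases lt_or_gt_of_ne hsne2 with hcase | hcase
  · -- s ∈ (1, t0+1), slope -a, F = -a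
    have hx0b' : ∀ r ∈ Set.Icc (1 : ℝ) (t0 + 1), x0 r = (-a) * r + a * t0 := by
      intro r hr; rw [hx0b r hr]; ring
    have hD := aux_deriv lam (-a) (a * t0) x0 1 (t0 + 1) s hsgt1 hcase hx0b'
    -- F value
    have hpos : 0 < x0 (s - 1) := by
      rcases le_or_gt (s - 1) 1 with h | h
      · rw [hx0a (s - 1) ⟨by linarith, h⟩]; linarith
      · rw [hx0b (s - 1) ⟨le_of_lt h, by linarith⟩]; nlinarith
    have hgt : 1 < Real.exp (lam * x0 (t - 1)) := by
      rw [hx0ts1, Real.one_lt_exp_iff]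
      exact mul_pos hlam hpos
    have hFval : F a (Real.exp (lam * x0 (t - 1))) = -a := by
      rw [F, if_neg (fun hc => absurd hc.2 (not_le.mpr hgt)), if_pos hgt]
    rw [hFval, hx0ts]
    -- shift the derivative from s to t
    rw [hs] at hD
    have h4 := aux_shift (fun r => Real.exp (lam * x0 r)) ((k : ℝ) * T0)
      (lam * -a * Real.exp (lam * x0 (t - (k : ℝ) * T0))) t hD
    rw [← hshift] at h4
    rw [← hs] at h4
    exact h4
  · -- s ∈ (t0+1, 1+T0), slope 1, F = 1
    have hx0f' : ∀ r ∈ Set.Icc (t0 + 1) (T0 + 1), x0 r = 1 * r + (-T0) := by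
      intro r hr; rw [hx0f r hr]; ring
    have hD := aux_deriv lam 1 (-T0) x0 (t0 + 1) (T0 + 1) s hcase (by linarith) hx0f'
    -- F value
    have hnonpos : x0 (s - 1) ≤ 0 := by
      rcases le_or_gt (s - 1) (t0 + 1) with h | h
      · rw [hx0b (s - 1) ⟨by linarith, h⟩]; nlinarith
      · rw [hx0c (s - 1) ⟨le_of_lt h, by linarith⟩]; linarith
    have hle : Real.exp (lam * x0 (t - 1)) ≤ 1 := by
      rw [hx0ts1, Real.exp_le_one_iff]
      exact mul_nonpos_of_nonneg_of_nonpos (le_of_lt hlam) hnonpos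
    have hFval : F a (Real.exp (lam * x0 (t - 1))) = 1 := by
      rw [F, if_pos ⟨Real.exp_pos _, hle⟩]
    rw [hFval, hx0ts]
    rw [hs] at hD
    have h4 := aux_shift (fun r => Real.exp (lam * x0 r)) ((k : ℝ) * T0)
      (lam * 1 * Real.exp (lam * x0 (t - (k : ℝ) * T0))) t hD
    rw [← hshift] at h4
    rw [← hs] at h4
    exact h4
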